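/- Let K be a set partitioned into a nonempty subset K_W and a FINITE subset K_B, and let M = (M_{km}) be a real K×K matrix satisfying: (i) |M_{kk}| = Σ_{m≠k} |M_{km}| for every k ∈ K_B; (ii) ND := sup_{k∈K_W} Σ_{m≠k} |M_{km}| < ∞; (iii) there exists ε > 0 with |M_{mm}| ≥ ND + ε for every m ∈ K_W; and (iv) the flow condition: for every k ∈ K_B there exist n ≥ 1 and k = k_0, k_1, …, k_n ∈ K with M_{k_i k_{i+1}} ≠ 0 for all 0 ≤ i < n and k_n ∈ K_W. Then M is injective on ℓ∞(K): if x : K → ℝ is bounded and Σ_{m∈K} M_{km}·x_m = 0 for every k ∈ K (all these sums converge absolutely), then x = 0. -/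

import Mathlib

private lemma aux_summable_full {K : Type*} (f : K → ℝ) (k : K)
    (h : Summable fun m : {m : K // m ≠ k} => f m) : Summable f :=
  summable_subtype_and_compl.mp ⟨(Set.finite_singleton k).summable _,
    (h : Summable fun m : ↥(({k} : Set K)ᶜ) => f m)⟩

private lemma aux_tsum_split {K : Type*} (f : K → ℝ) (k : K)
    (h : Summable fun m : {m : K // m ≠ k} => f m) :
    (∑' m, f m) = f k + ∑' m : {m : K // m ≠ k}, f m := by
  have h2 : Summable fun m : ↥(({k} : Set K)ᶜ) => f m := h
  have hf : Summable f := summable_subtype_and_compl.mp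
    ⟨(Set.finite_singleton k).summable _, h2⟩
  have h3 := Summable.tsum_subtype_add_tsum_subtype_compl hf ({k} : Set K)
  rw [tsum_singleton] at h3
  rw [← h3]; rfl

private lemma aux_abs_tsum_le {ι : Type*} (f : ι → ℝ) (h : Summable fun i => |f i|) :
    |∑' i, f i| ≤ ∑' i, |f i| := by
  have h' : Summable fun i => ‖f i‖ := by simpa [Real.norm_eq_abs] using h
  simpa [Real.norm_eq_abs] using norm_tsum_le_tsum_norm h'

/-- A matrix M with equality-dominance on the finite set K_B, uniform
strict dominance on K_W and the flow condition is injective on ℓ∞(K). -/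
theorem stmt_11 {K : Type*}
    (KW KB : Set K) (hKW : KW.Nonempty) (hKB : KB.Finite)
    (hpart : ∀ k : K, k ∈ KW ↔ k ∉ KB)
    (M : K → K → ℝ)
    (hrow_summable : ∀ k, Summable (fun m : {m : K // m ≠ k} => |M k (m : K)|))
    (hB : ∀ k ∈ KB, |M k k| = ∑' m : {m : K // m ≠ k}, |M k (m : K)|)
    (ND ε : ℝ) (hε : 0 < ε)
    (hND : ∀ k ∈ KW, ∑' m : {m : K // m ≠ k}, |M k (m : K)| ≤ ND)
    (hgap : ∀ m ∈ KW, ND + ε ≤ |M m m|)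
    (hflow : ∀ k ∈ KB, ∃ (n : ℕ) (p : ℕ → K), 1 ≤ n ∧ p 0 = k ∧
      (∀ i < n, M (p i) (p (i + 1)) ≠ 0) ∧ p n ∈ KW) :
    ∀ x : K → ℝ, (∃ C, ∀ k, |x k| ≤ C) →
      (∀ k, ∑' m, M k m * x m = 0) → x = 0 := by
  classical
  rintro x ⟨C, hC⟩ hMx
  obtain ⟨w, hw⟩ := hKW
  have hKne : Nonempty K := ⟨w⟩
  have hbdd : BddAbove (Set.range fun k => |x k|) := ⟨C, by rintro _ ⟨k, rfl⟩; exact hC k⟩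
  set S := ⨆ k, |x k| with hSdef
  have hxS : ∀ k, |x k| ≤ S := fun k => le_ciSup hbdd k
  have hS0 : 0 ≤ S := (abs_nonneg (x w)).trans (hxS w)
  have hND0 : 0 ≤ ND :=
    le_trans (tsum_nonneg fun m => abs_nonneg _) (hND w hw)
  -- summability facts
  have hsubS : ∀ k, Summable (fun m : {m : K // m ≠ k} => |M k (m : K)| * S) :=
    fun k => (hrow_summable k).mul_right S
  have hsub1 : ∀ k, Summable (fun m : {m : K // m ≠ k} => |M k (m : K)| * |x (m : K)|) :=
    fun k => (hsubS k).of_nonneg_of_le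
      (fun m => mul_nonneg (abs_nonneg _) (abs_nonneg _))
      (fun m => mul_le_mul_of_nonneg_left (hxS _) (abs_nonneg _))
  have hsub2 : ∀ k, Summable (fun m : {m : K // m ≠ k} => M k (m : K) * x (m : K)) :=
    fun k => Summable.of_abs (by simpa [abs_mul] using hsub1 k)
  -- key identity
  have hkey : ∀ k, |M k k| * |x k| =
      |∑' m : {m : K // m ≠ k}, M k (m : K) * x (m : K)| := by
    intro k
    have h3 : (0:ℝ) = M k k * x k + ∑' m : {m : K // m ≠ k}, M k (m : K) * x (m : K) := by
      have := aux_tsum_split (fun m => M k m * x m) k (hsub2 k)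
      rw [hMx k] at this
      exact this
    have h4 : M k k * x k = -∑' m : {m : K // m ≠ k}, M k (m : K) * x (m : K) := by
      linarith
    rw [← abs_mul, h4, abs_neg]
  have habs : ∀ k, |∑' m : {m : K // m ≠ k}, M k (m : K) * x (m : K)| ≤
      ∑' m : {m : K // m ≠ k}, |M k (m : K)| * |x (m : K)| := by
    intro k
    have := aux_abs_tsum_le (fun m : {m : K // m ≠ k} => M k (m : K) * x (m : K))
      (by simpa [abs_mul] using hsub1 k)
    simpa [abs_mul] using this
  have hmid : ∀ k, (∑' m : {m : K // m ≠ k}, |M k (m : K)| * |x (m : K)|) ≤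
      (∑' m : {m : K // m ≠ k}, |M k (m : K)|) * S := by
    intro k
    rw [← tsum_mul_right]
    exact Summable.tsum_le_tsum
      (fun m => mul_le_mul_of_nonneg_left (hxS _) (abs_nonneg _)) (hsub1 k) (hsubS k)
  have hkey2 : ∀ k, |M k k| * |x k| ≤ (∑' m : {m : K // m ≠ k}, |M k (m : K)|) * S :=
    fun k => (hkey k).trans_le ((habs k).trans (hmid k))
  -- quantitative bound on KW
  have hWq : ∀ k ∈ KW, (ND + ε) * |x k| ≤ ND * S := by
    intro k hk
    have h1 : (ND + ε) * |x k| ≤ |M k k| * |x k| :=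
      mul_le_mul_of_nonneg_right (hgap k hk) (abs_nonneg _)
    have h2 : (∑' m : {m : K // m ≠ k}, |M k (m : K)|) * S ≤ ND * S :=
      mul_le_mul_of_nonneg_right (hND k hk) hS0
    exact h1.trans ((hkey2 k).trans h2)
  -- equality propagation on KB
  have hprop : ∀ k ∈ KB, |x k| = S → ∀ m, M k m ≠ 0 → |x m| = S := by
    intro k hk hxk m hMkm
    by_cases hmk : m = k
    · rwa [hmk]
    -- all inequalities are equalities
    have hb : (∑' m : {m : K // m ≠ k}, |M k (m : K)|) * S = |M k k| * |x k| := by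
      rw [hxk, ← hB k hk]
    have heq : (∑' m : {m : K // m ≠ k}, |M k (m : K)| * |x (m : K)|) =
        (∑' m : {m : K // m ≠ k}, |M k (m : K)|) * S := by
      refine le_antisymm (hmid k) ?_
      rw [hb, hkey k]
      exact habs k
    have hgsum : Summable (fun m : {m : K // m ≠ k} =>
        |M k (m : K)| * S - |M k (m : K)| * |x (m : K)|) := (hsubS k).sub (hsub1 k)
    have hgz : (∑' m : {m : K // m ≠ k},
        (|M k (m : K)| * S - |M k (m : K)| * |x (m : K)|)) = 0 := by
      rw [Summable.tsum_sub (hsubS k) (hsub1 k), tsum_mul_right, heq, sub_self]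
    have hterm : |M k m| * S - |M k m| * |x m| ≤ 0 := by
      have := Summable.le_tsum hgsum ⟨m, hmk⟩ (fun j _ => by
        have := mul_le_mul_of_nonneg_left (hxS (j : K)) (abs_nonneg (M k (j : K)))
        linarith)
      rw [hgz] at this
      exact this
    have hterm2 : |M k m| * S = |M k m| * |x m| := by
      have hle := mul_le_mul_of_nonneg_left (hxS m) (abs_nonneg (M k m))
      linarith
    exact (mul_left_cancel₀ (abs_ne_zero.mpr hMkm) hterm2).symm
  -- conclude
  rcases eq_or_lt_of_le hS0 with hS0' | hSpos
  · funext k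
    have := hxS k
    rw [← hS0'] at this
    exact abs_nonpos_iff.mp this
  exfalso
  set A := ND * S / (ND + ε) with hAdef
  have hNDε : 0 < ND + ε := by linarith
  have hA : A < S := by
    rw [hAdef, div_lt_iff₀ hNDε]
    nlinarith
  have hxA : ∀ k ∈ KW, |x k| ≤ A := by
    intro k hk
    rw [hAdef, le_div_iff₀ hNDε]
    have := hWq k hk
    linarith [mul_comm (|x k|) (ND + ε)]
  have hW : ∀ k ∈ KW, |x k| < S := fun k hk => lt_of_le_of_lt (hxA k hk) hA
  -- S is attained on KB
  have hex : ∃ k0 ∈ KB, |x k0| = S := by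
    by_contra hcon
    push_neg at hcon
    have hBlt : ∀ k ∈ KB, |x k| < S := fun k hk => lt_of_le_of_ne (hxS k) (hcon k hk)
    obtain ⟨T, hT, hTb⟩ : ∃ T, T < S ∧ ∀ k ∈ KB, |x k| ≤ T := by
      rcases hKB.toFinset.eq_empty_or_nonempty with hF | hF
      · exact ⟨0, hSpos, fun k hk =>
          absurd (hKB.mem_toFinset.mpr hk) (by simp [hF])⟩
      · refine ⟨hKB.toFinset.sup' hF fun k => |x k|, ?_, ?_⟩
        · exact (Finset.sup'_lt_iff hF).mpr fun k hk => hBlt k (hKB.mem_toFinset.mp hk)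
        · exact fun k hk => Finset.le_sup' (fun k => |x k|) (hKB.mem_toFinset.mpr hk)
    have hle : S ≤ max A T := by
      refine ciSup_le fun k => ?_
      by_cases hk : k ∈ KB
      · exact (hTb k hk).trans (le_max_right _ _)
      · exact (hxA k ((hpart k).mpr hk)).trans (le_max_left _ _)
    exact absurd hle (not_le.mpr (max_lt hA hT))
  obtain ⟨k0, hk0B, hk0S⟩ := hex
  obtain ⟨n, p, hn1, hp0, hpath, hpn⟩ := hflow k0 hk0B
  have hall : ∀ i, i ≤ n → |x (p i)| = S := by
    intro i
    induction i with
    | zero => intro _; rw [hp0]; exact hk0S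
    | succ i ih =>
      intro h
      have hi : i < n := Nat.lt_of_succ_le h
      have hxi := ih hi.le
      by_cases hpi : p i ∈ KB
      · exact hprop _ hpi hxi _ (hpath i hi)
      · exact absurd hxi (ne_of_lt (hW _ ((hpart _).mpr hpi)))
  exact absurd (hall n le_rfl) (ne_of_lt (hW _ hpn))
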